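/- For every t ∈ [−1,1], the set f⁻¹({t}) ∩ E is closed in the subspace E of C. -/

import Mathlib

open Set Topology

/-- The Cantor space `2^ℕ`, with coordinates indexed by the positive integers. -/
abbrev Cant : Type := ℕ+ → Bool

/-- The support of a point of the Cantor space, as a set of (positive) natural numbers. -/
def ksupp (x : Cant) : Set ℕ := {i | ∃ h : 0 < i, x ⟨i, h⟩ = true}

open scoped Classical in
/-- Kuratowski's function `f(x) = Σ_j (−1)^{c_x(j)} 2^{−j}`, where `c_x` enumerates the
support of `x` in increasing order; here the summation index `j : ℕ` is the 0-based
version of the paper's 1-based position index, so the weight is `2^{−(j+1)}`. -/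
noncomputable def kf (x : Cant) : ℝ :=
  ∑' j : ℕ, if (ksupp x).Infinite ∨ j < (ksupp x).ncard then
    (-1 : ℝ) ^ (Nat.nth (· ∈ ksupp x) j) * (2 : ℝ) ^ (-(j + 1 : ℤ)) else 0

open scoped Classical

lemma nth_eq_of_agree {p q : ℕ → Prop} (hp : (setOf p).Infinite) (j : ℕ)
    (hagree : ∀ i ≤ Nat.nth p j, (q i ↔ p i)) : Nat.nth q j = Nat.nth p j := by
  set N := Nat.nth p j with hN
  have hpN : p N := Nat.nth_mem_of_infinite hp j
  have hqN : q N := (hagree N le_rfl).mpr hpN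
  have hcount : Nat.count q N = Nat.count p N := by
    rw [Nat.count_eq_card_filter_range, Nat.count_eq_card_filter_range]
    congr 1
    apply Finset.filter_congr
    intro i hi
    simp only [Finset.mem_range] at hi
    simpa using hagree i hi.le
  have hcp : Nat.count p N = j := Nat.count_nth_of_infinite hp j
  have := Nat.nth_count hqN
  rwa [hcount, hcp] at this

lemma nthE_continuous (j : ℕ) :
    Continuous (fun z : {x : Cant // (ksupp x).Infinite} =>
      Nat.nth (· ∈ ksupp z.val) j) := by
  rw [continuous_iff_continuousAt]
  intro z
  refine Filter.Tendsto.mono_right (Filter.tendsto_pure.mpr ?_) (pure_le_nhds _)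
  set N := Nat.nth (· ∈ ksupp z.val) j with hN
  -- eventually, y agrees with z on all coordinates ≤ N
  have hev : ∀ᶠ y : Cant in nhds z.val, ∀ i : ℕ+, (i : ℕ) ≤ N → y i = z.val i := by
    have : ∀ i : ℕ+, ∀ᶠ y : Cant in nhds z.val, y i = z.val i := by
      intro i
      have h1 : ContinuousAt (fun y : Cant => y i) z.val := (continuous_apply i).continuousAt
      have h2 : ∀ᶠ b in nhds (z.val i), b = z.val i := by
        rw [nhds_discrete, Filter.eventually_pure]
      exact h1.eventually h2
    have hfin : ∀ᶠ y : Cant in nhds z.val,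
        ∀ i ∈ Finset.filter (fun i : ℕ+ => (i : ℕ) ≤ N) (Finset.Icc 1 ⟨N + 1, Nat.succ_pos N⟩),
          y i = z.val i := by
      rw [Filter.eventually_all_finset]
      intro i _
      exact this i
    filter_upwards [hfin] with y hy i hi
    apply hy
    simp only [Finset.mem_filter, Finset.mem_Icc]
    refine ⟨Finset.mem_Icc.mpr ⟨i.one_le, ?_⟩, hi⟩
    · exact (PNat.coe_le_coe i ⟨N + 1, Nat.succ_pos N⟩).mp (Nat.le_succ_of_le hi)
  have hev2 : ∀ᶠ w : {x : Cant // (ksupp x).Infinite} in nhds z,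
      ∀ i : ℕ+, (i : ℕ) ≤ N → w.val i = z.val i :=
    (continuous_subtype_val.continuousAt).eventually hev
  filter_upwards [hev2] with w hw
  apply nth_eq_of_agree z.2 j
  intro i hi
  constructor
  · rintro ⟨h, hval⟩
    exact ⟨h, by rw [← hw ⟨i, h⟩ hi]; exact hval⟩
  · rintro ⟨h, hval⟩
    exact ⟨h, by rw [hw ⟨i, h⟩ hi]; exact hval⟩

lemma kfE_continuous :
    Continuous (fun z : {x : Cant // (ksupp x).Infinite} => kf z.val) := by
  have hkf : ∀ z : {x : Cant // (ksupp x).Infinite},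
      kf z.val = ∑' j : ℕ, (-1 : ℝ) ^ (Nat.nth (· ∈ ksupp z.val) j) * (2 : ℝ) ^ (-(j + 1 : ℤ)) := by
    intro z
    unfold kf
    exact tsum_congr fun j => if_pos (Or.inl z.2)
  simp only [hkf]
  apply continuous_tsum (u := fun j : ℕ => (2 : ℝ) ^ (-(j + 1 : ℤ)))
  · intro j
    exact Continuous.mul
      ((continuous_of_discreteTopology (f := fun n : ℕ => (-1 : ℝ) ^ n)).comp (nthE_continuous j))
      continuous_const
  · have : (fun j : ℕ => (2 : ℝ) ^ (-(j + 1 : ℤ))) =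
        fun j : ℕ => (1 / 2 : ℝ) * (1 / 2) ^ j := by
      funext j
      rw [zpow_neg, zpow_add₀ (by norm_num : (2:ℝ) ≠ 0), zpow_one, zpow_natCast, mul_inv]
      simp only [one_div, inv_pow]
      ring
    rw [this]
    exact (summable_geometric_of_lt_one (by norm_num) (by norm_num)).mul_left _
  · intro j z
    rw [norm_mul, norm_pow, norm_neg, norm_one, one_pow, one_mul]
    rw [Real.norm_eq_abs, abs_of_pos (zpow_pos (by norm_num) _)]

/-- For every `t ∈ [−1,1]`, the set `f⁻¹({t}) ∩ E` is closed in the subspace `E`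
of points with infinite support. -/
theorem kf_preimage_inter_E_closed (t : ℝ) (ht : t ∈ Icc (-1 : ℝ) 1) :
    IsClosed {z : {x : Cant // (ksupp x).Infinite} | kf z.val = t} := by
  have : {z : {x : Cant // (ksupp x).Infinite} | kf z.val = t} =
      (fun z : {x : Cant // (ksupp x).Infinite} => kf z.val) ⁻¹' {t} := rfl
  rw [this]
  exact isClosed_singleton.preimage kfE_continuous
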